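/- Let n ≥ 3 and 2 ≤ k ≤ n be integers, and let r, t, c be real numbers. Let M be the symmetric n×n real matrix with M₁₁ = 2eᵗ, Mᵢᵢ = 2eᵗ for 2 ≤ i ≤ n−1, M₁ₙ = Mₙ₁ = 2reᵗ, Mₙₙ = r²eᵗ + c, and all other entries zero. Then σ_k(M) = 2^{k−1} C(n−2, k−2)(e^{(k−1)t} c − e^{kt} r²) + 2^{k−1} C(n−2, k−1)(e^{kt} r² + e^{(k−1)t} c) + 2^k C(n−1, k) e^{kt}, where C(·,·) denotes the binomial coefficient. -/

import Mathlib

open Finset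

/-- The `k`-th elementary symmetric function of a square real matrix:
the sum of its `k × k` principal minors. -/
noncomputable def sigmaK {ι : Type*} [Fintype ι] [DecidableEq ι] (k : ℕ)
    (A : Matrix ι ι ℝ) : ℝ :=
  ∑ s ∈ (Finset.univ : Finset ι).powersetCard k,
    Matrix.det (fun i j : {x : ι // x ∈ s} => A i.1 j.1)

/-- The Hessian matrix of `u` at `x`, with entries `∂ᵢ∂ⱼ u (x)`. -/
noncomputable def hessian {ι : Type*} [Fintype ι] [DecidableEq ι]
    (u : (ι → ℝ) → ℝ) (x : ι → ℝ) : Matrix ι ι ℝ :=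
  fun i j => fderiv ℝ (fun y => fderiv ℝ u y (Pi.single j 1)) x (Pi.single i 1)

lemma det_subtype_diag {ι : Type*} [Fintype ι] [DecidableEq ι] (s : Finset ι)
    (M : Matrix ι ι ℝ) (h : ∀ i ∈ s, ∀ j ∈ s, i ≠ j → M i j = 0) :
    Matrix.det (fun i j : {x : ι // x ∈ s} => M i.1 j.1) = ∏ i ∈ s, M i i := by
  have hA : (fun i j : {x : ι // x ∈ s} => M i.1 j.1)
      = Matrix.diagonal (fun i : {x : ι // x ∈ s} => M i.1 i.1) := by
    ext i j
    rcases eq_or_ne i j with rfl | hij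
    · simp
    · rw [Matrix.diagonal_apply_ne _ hij]
      exact h i.1 i.2 j.1 j.2 (fun e => hij (Subtype.ext e))
  rw [hA, Matrix.det_diagonal]
  exact Finset.prod_coe_sort s (fun i => M i i)

lemma det_subtype_upper {ι : Type*} [Fintype ι] [DecidableEq ι] [LinearOrder ι]
    (s : Finset ι) (A : Matrix {x : ι // x ∈ s} {x : ι // x ∈ s} ℝ)
    (h : ∀ i j : {x : ι // x ∈ s}, j.1 < i.1 → A i j = 0) :
    A.det = ∏ i : {x : ι // x ∈ s}, A i i := by
  apply Matrix.det_of_upperTriangular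
  intro i j hij
  exact h i j hij

lemma sum_powersetCard_insert {α : Type*} [DecidableEq α] (x : α) (v : Finset α)
    (hx : x ∉ v) (j : ℕ) (g : Finset α → ℝ) :
    ∑ s ∈ (insert x v).powersetCard (j+1), g s
      = (∑ s ∈ v.powersetCard (j+1), g s) + ∑ s ∈ v.powersetCard j, g (insert x s) := by
  rw [Finset.powersetCard_succ_insert hx, Finset.sum_union, Finset.sum_image]
  · intro a ha b hb hab
    have ha' : x ∉ a := fun h => hx ((Finset.mem_powersetCard.mp ha).1 h)
    have hb' : x ∉ b := fun h => hx ((Finset.mem_powersetCard.mp hb).1 h)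
    rw [← Finset.erase_insert ha', hab, Finset.erase_insert hb']
  · rw [Finset.disjoint_left]
    intro a ha hb
    obtain ⟨b, hb', rfl⟩ := Finset.mem_image.mp hb
    exact hx ((Finset.mem_powersetCard.mp ha).1 (Finset.mem_insert_self x b))

/-- Explicit computation of `σ_k` of the matrix arising as the Hessian of
`u(x,t) = r² eᵗ + h(t)` (with `c = h''(t)`). -/
theorem sigmaK_of_hessian_matrix (n k : ℕ) (hn : 3 ≤ n) (hk2 : 2 ≤ k) (hkn : k ≤ n)
    (r t c : ℝ) (M : Matrix (Fin n) (Fin n) ℝ)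
    (hM : M = Matrix.of fun i j : Fin n =>
      if i = j then (if (i : ℕ) = n - 1 then r ^ 2 * Real.exp t + c else 2 * Real.exp t)
      else if ((i : ℕ) = 0 ∧ (j : ℕ) = n - 1) ∨ ((i : ℕ) = n - 1 ∧ (j : ℕ) = 0)
        then 2 * r * Real.exp t else 0) :
    sigmaK k M
      = 2 ^ (k - 1) * ((n - 2).choose (k - 2) : ℝ)
          * (Real.exp (((k : ℝ) - 1) * t) * c - Real.exp (k * t) * r ^ 2)
      + 2 ^ (k - 1) * ((n - 2).choose (k - 1) : ℝ)
          * (Real.exp (k * t) * r ^ 2 + Real.exp (((k : ℝ) - 1) * t) * c)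
      + 2 ^ k * ((n - 1).choose k : ℝ) * Real.exp (k * t) := by
  obtain ⟨m, rfl⟩ : ∃ m, k = m + 2 := ⟨k - 2, by omega⟩
  set E := Real.exp t with hE
  have hne : (0 : ℕ) ≠ n - 1 := by omega
  set e0 : Fin n := ⟨0, by omega⟩ with he0def
  set en : Fin n := ⟨n - 1, by omega⟩ with hendef
  have h0n : e0 ≠ en := by simp [he0def, hendef, Fin.ext_iff]; omega
  have h0ltn : (e0 : ℕ) < (en : ℕ) := by simp [he0def, hendef]; omega
  -- entries of M
  have Mdiag : ∀ i : Fin n, (i : ℕ) ≠ n - 1 → M i i = 2 * E := by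
    intro i hi; simp [hM, hi]
  have Mdiagn : M en en = r ^ 2 * E + c := by simp [hM, hendef]
  have M0n : M e0 en = 2 * r * E := by
    simp [hM, he0def, hendef, Fin.ext_iff, hne]
  have Mn0 : M en e0 = 2 * r * E := by
    simp [hM, he0def, hendef, Fin.ext_iff, hne.symm]
  have Moff : ∀ i j : Fin n, i ≠ j → ¬((i : ℕ) = 0 ∧ (j : ℕ) = n - 1) →
      ¬((i : ℕ) = n - 1 ∧ (j : ℕ) = 0) → M i j = 0 := by
    intro i j h1 h2 h3; simp [hM, h1, h2, h3]
  -- the index set split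
  set w : Finset (Fin n) := Finset.univ \ {e0, en} with hw
  have hmemw : ∀ x : Fin n, x ∈ w ↔ x ≠ e0 ∧ x ≠ en := by
    intro x; simp [hw, not_or]
  have hvalw : ∀ x ∈ w, (x : ℕ) ≠ 0 ∧ (x : ℕ) ≠ n - 1 := by
    intro x hx
    obtain ⟨h1, h2⟩ := (hmemw x).1 hx
    constructor
    · intro h; exact h1 (by simp [he0def, Fin.ext_iff, h])
    · intro h; exact h2 (by simp [hendef, Fin.ext_iff, h])
  have henw : en ∉ w := by simp [hmemw]
  have he0w : e0 ∉ insert en w := by simp [hmemw, h0n]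
  have hcardw : w.card = n - 2 := by
    rw [hw, Finset.card_sdiff_of_subset (Finset.subset_univ _), Finset.card_univ, Fintype.card_fin,
      Finset.card_insert_of_notMem (by simpa using h0n), Finset.card_singleton]
  have huniv : (Finset.univ : Finset (Fin n)) = insert e0 (insert en w) := by
    ext x
    simp only [Finset.mem_univ, Finset.mem_insert, true_iff, hmemw]
    by_cases h1 : x = e0
    · tauto
    · by_cases h2 : x = en <;> tauto
  set f : Finset (Fin n) → ℝ :=
    fun s => Matrix.det (fun i j : {x : Fin n // x ∈ s} => M i.1 j.1) with hf
  -- values of the four classes of minors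
  have val1 : ∀ s ∈ w.powersetCard (m+2), f s = (2*E)^(m+2) := by
    intro s hs
    obtain ⟨hsub, hcard⟩ := Finset.mem_powersetCard.mp hs
    simp only [hf]
    rw [det_subtype_diag]
    · rw [Finset.prod_congr rfl (fun i hi => Mdiag i (hvalw i (hsub hi)).2),
        Finset.prod_const, hcard]
    · intro i hi j hj hij
      exact Moff i j hij (fun h => (hvalw i (hsub hi)).1 h.1)
        (fun h => (hvalw i (hsub hi)).2 h.1)
  have val2 : ∀ s ∈ w.powersetCard (m+1),
      f (insert en s) = (r^2*E + c) * (2*E)^(m+1) := by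
    intro s hs
    obtain ⟨hsub, hcard⟩ := Finset.mem_powersetCard.mp hs
    have hens : en ∉ s := fun h => henw (hsub h)
    have hx0 : ∀ x ∈ insert en s, (x : ℕ) ≠ 0 := by
      intro x hx
      rcases Finset.mem_insert.mp hx with rfl | hx
      · simp [hendef]; omega
      · exact (hvalw x (hsub hx)).1
    simp only [hf]
    rw [det_subtype_diag]
    · rw [Finset.prod_insert hens, Mdiagn,
        Finset.prod_congr rfl (fun i hi => Mdiag i (hvalw i (hsub hi)).2),
        Finset.prod_const, hcard]
    · intro i hi j hj hij
      exact Moff i j hij (fun h => hx0 i hi h.1) (fun h => hx0 j hj h.2)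
  have val3 : ∀ s ∈ w.powersetCard (m+1),
      f (insert e0 s) = (2*E)^(m+2) := by
    intro s hs
    obtain ⟨hsub, hcard⟩ := Finset.mem_powersetCard.mp hs
    have he0s : e0 ∉ s := fun h => ((hmemw e0).1 (hsub h)).1 rfl
    have hxn : ∀ x ∈ insert e0 s, (x : ℕ) ≠ n - 1 := by
      intro x hx
      rcases Finset.mem_insert.mp hx with rfl | hx
      · simpa [he0def] using hne
      · exact (hvalw x (hsub hx)).2
    simp only [hf]
    rw [det_subtype_diag]
    · rw [Finset.prod_congr rfl (fun i hi => Mdiag i (hxn i hi)),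
        Finset.prod_const, Finset.card_insert_of_notMem he0s, hcard]
    · intro i hi j hj hij
      exact Moff i j hij (fun h => hxn j hj h.2) (fun h => hxn i hi h.1)
  have val4 : ∀ s ∈ w.powersetCard m,
      f (insert e0 (insert en s)) = (2*E) * ((c - r^2*E) * (2*E)^m) := by
    intro s hs
    obtain ⟨hsub, hcard⟩ := Finset.mem_powersetCard.mp hs
    have hens : en ∉ s := fun h => henw (hsub h)
    have he0s : e0 ∉ insert en s := by
      simp only [Finset.mem_insert, not_or]
      exact ⟨h0n, fun h => ((hmemw e0).1 (hsub h)).1 rfl⟩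
    set u : Finset (Fin n) := insert e0 (insert en s) with hu
    have he0u : e0 ∈ u := Finset.mem_insert_self _ _
    have henu : en ∈ u := by simp [hu]
    have hvalu : ∀ x ∈ u, (x : ℕ) ≠ n - 1 → x ≠ en := by
      intro x _ hx h; rw [h] at hx; simp [hendef] at hx
    have humem : ∀ x ∈ u, x ≠ e0 → x ≠ en → ((x : ℕ) ≠ 0 ∧ (x : ℕ) ≠ n - 1) := by
      intro x hx h1 h2
      rcases Finset.mem_insert.mp hx with rfl | hx
      · exact absurd rfl h1
      rcases Finset.mem_insert.mp hx with rfl | hx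
      · exact absurd rfl h2
      exact hvalw x (hsub hx)
    set I : {x : Fin n // x ∈ u} := ⟨en, henu⟩ with hI
    set J : {x : Fin n // x ∈ u} := ⟨e0, he0u⟩ with hJ
    have hIJ : I ≠ J := by
      simp only [hI, hJ, ne_eq, Subtype.mk.injEq]
      exact h0n.symm
    set A : Matrix {x : Fin n // x ∈ u} {x : Fin n // x ∈ u} ℝ :=
      fun i j => M i.1 j.1 with hA
    simp only [hf]
    rw [show (fun i j : {x : Fin n // x ∈ u} => M i.1 j.1) = A from rfl, ← Matrix.det_updateRow_add_smul_self A hIJ (-r)]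
    set B : Matrix {x : Fin n // x ∈ u} {x : Fin n // x ∈ u} ℝ :=
      A.updateRow I (A I + (-r) • A J) with hB
    have hcoe : ∀ a : {x : Fin n // x ∈ u}, a ≠ I → (a.1 : ℕ) ≠ n - 1 := by
      intro a ha h
      exact ha (Subtype.ext (Fin.ext h))
    have hcoe0 : ∀ a : {x : Fin n // x ∈ u}, a ≠ J → (a.1 : ℕ) ≠ 0 := by
      intro a ha h
      exact ha (Subtype.ext (Fin.ext h))
    have htri : ∀ i j : {x : Fin n // x ∈ u}, j.1 < i.1 → B i j = 0 := by
      intro a b hab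
      have habne : a ≠ b := fun h => absurd (h ▸ hab) (lt_irrefl _)
      have habne' : a.1 ≠ b.1 := fun h => habne (Subtype.ext h)
      rcases eq_or_ne a I with rfl | haI
      · -- row en, updated
        rw [hB, Matrix.updateRow_self, Pi.add_apply, Pi.smul_apply, smul_eq_mul]
        rcases eq_or_ne b J with rfl | hbJ
        · -- column e0
          show M en e0 + (-r) * M e0 e0 = 0
          rw [Mn0, Mdiag e0 (by simpa [he0def] using hne)]
          ring
        · -- other column: b ≠ I, b ≠ J
          have hbI : b ≠ I := habne.symm
          have hbn : (b.1 : ℕ) ≠ n - 1 := hcoe b hbI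
          have hb0 : (b.1 : ℕ) ≠ 0 := hcoe0 b hbJ
          show M en b.1 + (-r) * M e0 b.1 = 0
          rw [Moff en b.1 (fun h => hbn (by rw [← h]))
              (fun h => absurd h.1 (by simp [hendef]; omega)) (fun h => hb0 h.2),
            Moff e0 b.1 (fun h => hb0 (by rw [← h]))
              (fun h => hbn h.2) (fun h => absurd h.1 (by simp [he0def]; omega))]
          ring
      · -- untouched row
        rw [hB, Matrix.updateRow_ne haI]
        have han : (a.1 : ℕ) ≠ n - 1 := hcoe a haI
        apply Moff a.1 b.1 habne'
        · rintro ⟨-, hb2⟩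
          have : (b.1 : ℕ) < (a.1 : ℕ) := hab
          omega
        · rintro ⟨ha2, -⟩; exact han ha2
    rw [det_subtype_upper u B htri]
    have hdiagB : ∀ i : {x : Fin n // x ∈ u},
        B i i = (if (i.1 : ℕ) = n - 1 then c - r^2*E else 2*E) := by
      intro i
      rcases eq_or_ne i I with rfl | hiI
      · rw [hB, Matrix.updateRow_self, Pi.add_apply, Pi.smul_apply, smul_eq_mul]
        show M en en + (-r) * M e0 en = if ((en : Fin n) : ℕ) = n - 1 then _ else _
        rw [Mdiagn, M0n, if_pos (by simp [hendef])]
        ring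
      · rw [hB, Matrix.updateRow_ne hiI, if_neg (hcoe i hiI)]
        exact Mdiag i.1 (hcoe i hiI)
    rw [Fintype.prod_congr _ _ hdiagB, Finset.prod_coe_sort u
      (fun x => if (x : ℕ) = n - 1 then c - r^2*E else 2*E)]
    rw [hu, Finset.prod_insert he0s, Finset.prod_insert hens,
      if_neg (by simpa [he0def] using hne), if_pos (by simp [hendef]),
      Finset.prod_congr rfl (fun x hx => if_neg (hvalw x (hsub hx)).2),
      Finset.prod_const, hcard]
  -- assemble the sum
  have hsig : sigmaK (m+2) M = ∑ s ∈ (Finset.univ : Finset (Fin n)).powersetCard (m+2), f s := rfl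
  rw [hsig, huniv, sum_powersetCard_insert e0 _ he0w (m+1) f,
    sum_powersetCard_insert en w henw (m+1) f,
    sum_powersetCard_insert en w henw m (fun s => f (insert e0 s))]
  rw [Finset.sum_congr rfl val1, Finset.sum_congr rfl val2,
    Finset.sum_congr rfl val3, Finset.sum_congr rfl val4]
  rw [Finset.sum_const, Finset.sum_const, Finset.sum_const, Finset.sum_const,
    Finset.card_powersetCard, Finset.card_powersetCard, Finset.card_powersetCard, hcardw]
  simp only [nsmul_eq_mul]
  -- arithmetic
  have he1 : Real.exp ((((m:ℕ)+2 : ℕ) : ℝ) * t) = E^(m+2) := by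
    rw [hE]; exact_mod_cast Real.exp_nat_mul t (m+2)
  have he2 : ((((m:ℕ)+2 : ℕ) : ℝ) - 1) * t = (((m+1 : ℕ)) : ℝ) * t := by push_cast; ring
  have he3 : Real.exp ((((m:ℕ)+1 : ℕ) : ℝ) * t) = E^(m+1) := by
    rw [hE]; exact_mod_cast Real.exp_nat_mul t (m+1)
  have hch : ((n-1).choose (m+2) : ℝ) = (n-2).choose (m+1) + (n-2).choose (m+2) := by
    have hnm : n - 1 = (n - 2) + 1 := by omega
    rw [hnm, show m + 2 = (m+1) + 1 from rfl, Nat.choose_succ_succ]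
    push_cast; ring
  have hk1 : m + 2 - 1 = m + 1 := rfl
  have hk2' : m + 2 - 2 = m := rfl
  rw [hk1, hk2', he2, he1, he3, hch]
  ring
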